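/- Let n, m, p, d be positive integers. Let A (n×n), B (n×m), C (p×n), D (n×d) be real matrices; let W (d×d), V (p×p), Γ_w (m×m), Γ_v (p×p) be symmetric positive definite matrices, Ē a symmetric n×n matrix, X̂ and Ŷ symmetric n×n matrices, Q̂ an n×n matrix, F̂ an n×p matrix, and Û an invertible n×n matrix. Assume: (i) the symmetric 8×8 block matrix with upper-triangular blocks given by row 1: [X̂, I, A·X̂, A, D, B, 0, 0], row 2: [Ŷ, Q̂, Ŷ·A + F̂·C, Ŷ·D, Ŷ·B, F̂, F̂], row 3: [X̂, I, 0, 0, 0, 0], row 4: [Ŷ, 0, 0, 0, 0], row 5: [W⁻¹, 0, 0, 0], row 6: [Γ_w, 0, 0], row 7: [V⁻¹, 0], row 8: [Γ_v] is positive definite; and (ii) the block matrix [[Ē, X̂ − Û, I], [(X̂ − Û)ᵀ, X̂, I], [I, I, Ŷ]] is positive definite. Then Ŝ := (I − Ŷ·X̂)·Û⁻¹ is invertible, and defining Â = Ŝ⁻¹·(Q̂ − Ŷ·A·X̂ − F̂·C·X̂)·Û⁻¹, B̂ = Ŝ⁻¹·F̂, and the augmented matrices 𝐀̂ = [[A,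 0], [B̂·C, Â]] (2n×2n), 𝐁̂ = [[D, B, 0, 0], [0, 0, B̂, B̂]] (2n×(d+m+p+p)), 𝐂̂ = [I, −I] (n×2n), 𝐖 = blockdiag(W, Γ_w⁻¹, V, Γ_v⁻¹), there exists a symmetric positive definite 2n×2n matrix 𝐗̂ such that 𝐗̂ − 𝐀̂𝐗̂𝐀̂ᵀ − 𝐁̂𝐖𝐁̂ᵀ is positive definite and Ē − 𝐂̂𝐗̂𝐂̂ᵀ is positive definite. -/

import Mathlib

open Matrix

set_option linter.unusedSectionVars false
set_option linter.unusedVariables false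

section Aux

variable {l m : Type*} [Fintype l] [Fintype m] [DecidableEq l] [DecidableEq m]

private lemma herm_t {M : Matrix m m ℝ} (h : M.IsHermitian) : Mᵀ = M := by
  rw [← conjTranspose_eq_transpose_of_trivial]; exact h

private lemma posDef_conj {M T : Matrix m m ℝ} (hM : M.PosDef) (hT : IsUnit T) :
    (Tᵀ * M * T).PosDef := by
  refine posDef_iff_dotProduct_mulVec.mpr ⟨?_, fun x hx => ?_⟩
  · have := isHermitian_conjTranspose_mul_mul T hM.1
    rwa [conjTranspose_eq_transpose_of_trivial] at this
  · have hx' : T *ᵥ x ≠ 0 := fun hc =>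
      hx (mulVec_injective_iff_isUnit.mpr hT (by rw [hc, mulVec_zero]))
    have key : star x ⬝ᵥ ((Tᵀ * M * T) *ᵥ x)
        = star (T *ᵥ x) ⬝ᵥ (M *ᵥ (T *ᵥ x)) := by
      rw [Matrix.mul_assoc, ← mulVec_mulVec, dotProduct_mulVec, star_trivial, star_trivial,
        vecMul_transpose, ← mulVec_mulVec]
    rw [key]
    exact hM.dotProduct_mulVec_pos hx'

private lemma posDef_of_conj {M T : Matrix m m ℝ} (h : (Tᵀ * M * T).PosDef) (hT : IsUnit T) :
    M.PosDef := by
  haveI := hT.invertible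
  have hT' : IsUnit T⁻¹ := isUnit_nonsing_inv_iff.mpr hT
  have := posDef_conj h hT'
  have hMe : (T⁻¹)ᵀ * (Tᵀ * M * T) * T⁻¹ = M := by
    rw [transpose_nonsing_inv]
    simp only [Matrix.mul_assoc, Matrix.mul_inv_cancel_left_of_invertible,
      Matrix.inv_mul_cancel_left_of_invertible, Matrix.mul_inv_cancel_right_of_invertible,
      Matrix.mul_inv_of_invertible, Matrix.mul_one]
  rwa [hMe] at this

private lemma posDef₁₁ {A : Matrix l l ℝ} {B : Matrix l m ℝ} {C : Matrix m l ℝ}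
    {D : Matrix m m ℝ} (h : (fromBlocks A B C D).PosDef) : A.PosDef := by
  refine posDef_iff_dotProduct_mulVec.mpr ⟨?_, fun x hx => ?_⟩
  · have := congrArg Matrix.toBlocks₁₁ h.1
    simpa [fromBlocks_conjTranspose, fromBlocks_transpose, Matrix.IsSymm] using this
  · have hx' : (Sum.elim x 0 : l ⊕ m → ℝ) ≠ 0 := fun hc => hx (by
      funext i; simpa using congrFun hc (Sum.inl i))
    have := h.dotProduct_mulVec_pos hx'
    simpa [fromBlocks_mulVec, star_trivial, sumElim_dotProduct_sumElim] using this

private lemma posDef₂₂ {A : Matrix l l ℝ} {B : Matrix l m ℝ} {C : Matrix m l ℝ}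
    {D : Matrix m m ℝ} (h : (fromBlocks A B C D).PosDef) : D.PosDef := by
  refine posDef_iff_dotProduct_mulVec.mpr ⟨?_, fun x hx => ?_⟩
  · have := congrArg Matrix.toBlocks₂₂ h.1
    simpa [fromBlocks_conjTranspose, fromBlocks_transpose, Matrix.IsSymm] using this
  · have hx' : (Sum.elim 0 x : l ⊕ m → ℝ) ≠ 0 := fun hc => hx (by
      funext i; simpa using congrFun hc (Sum.inr i))
    have := h.dotProduct_mulVec_pos hx'
    simpa [fromBlocks_mulVec, star_trivial, sumElim_dotProduct_sumElim] using this

private lemma fromBlocks_sub {R : Type*} [Sub R]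
    (A A' : Matrix l l R) (B B' : Matrix l m R) (C C' : Matrix m l R) (D D' : Matrix m m R) :
    fromBlocks A B C D - fromBlocks A' B' C' D'
      = fromBlocks (A - A') (B - B') (C - C') (D - D') := by
  ext (i | i) (j | j) <;> simp [Matrix.sub_apply]

private lemma schur_posDef {A : Matrix l l ℝ} {B : Matrix l m ℝ} {D : Matrix m m ℝ}
    (hD : D.PosDef) (h : (fromBlocks A B Bᵀ D).PosDef) : (A - B * D⁻¹ * Bᵀ).PosDef := by
  haveI := hD.isUnit.invertible
  have hDinvT : (D⁻¹)ᵀ = D⁻¹ := by rw [transpose_nonsing_inv, herm_t hD.1]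
  have hUd : IsUnit (fromBlocks (1 : Matrix l l ℝ) 0 (D⁻¹ * Bᵀ) (1 : Matrix m m ℝ)) := by
    rw [Matrix.isUnit_iff_isUnit_det, det_fromBlocks_zero₁₂]; simp
  have key : (fromBlocks (1 : Matrix l l ℝ) 0 (D⁻¹ * Bᵀ) (1 : Matrix m m ℝ))ᵀ
      * (fromBlocks (A - B * D⁻¹ * Bᵀ) 0 0 D)
      * (fromBlocks (1 : Matrix l l ℝ) 0 (D⁻¹ * Bᵀ) (1 : Matrix m m ℝ))
      = fromBlocks A B Bᵀ D := by
    rw [fromBlocks_transpose, fromBlocks_multiply, fromBlocks_multiply]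
    rw [transpose_mul, hDinvT, transpose_transpose]
    apply fromBlocks_inj.mpr
    refine ⟨?_, ?_, ?_, ?_⟩ <;>
      simp [Matrix.mul_assoc, Matrix.mul_inv_cancel_left_of_invertible,
        Matrix.inv_mul_cancel_left_of_invertible]
  have h0 : (fromBlocks (A - B * D⁻¹ * Bᵀ) 0 0 D).PosDef :=
    posDef_of_conj (by rw [key]; exact h) hUd
  exact posDef₁₁ h0

end Aux

/-- Estimator-synthesis content of Theorem 1: feasibility of the LMIs (12)–(13)
yields, through the reconstruction (14)–(15), an adversary estimator such that
the joint (state, estimate) covariance is bounded by `𝐗̂` and the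
estimation-error covariance `𝐂̂𝐗̂𝐂̂ᵀ` is bounded by `Ē`; the privacy noise
covariances are `Wᵖ = Γ_w⁻¹` and `Vᵖ = Γ_v⁻¹`. -/
theorem theorem1_estimator_synthesis
    (n m p d : ℕ) (hn : 0 < n) (hm : 0 < m) (hp : 0 < p) (hd : 0 < d)
    (A : Matrix (Fin n) (Fin n) ℝ) (B : Matrix (Fin n) (Fin m) ℝ)
    (C : Matrix (Fin p) (Fin n) ℝ) (D : Matrix (Fin n) (Fin d) ℝ)
    (W : Matrix (Fin d) (Fin d) ℝ) (V : Matrix (Fin p) (Fin p) ℝ)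
    (Gw : Matrix (Fin m) (Fin m) ℝ) (Gv : Matrix (Fin p) (Fin p) ℝ)
    (hW : W.PosDef) (hV : V.PosDef) (hGw : Gw.PosDef) (hGv : Gv.PosDef)
    (Ebar : Matrix (Fin n) (Fin n) ℝ) (hEbar : Ebar.IsHermitian)
    (Xhat Yhat : Matrix (Fin n) (Fin n) ℝ)
    (hXhatsymm : Xhat.IsHermitian) (hYhatsymm : Yhat.IsHermitian)
    (Qhat : Matrix (Fin n) (Fin n) ℝ) (Fhat : Matrix (Fin n) (Fin p) ℝ)
    (Uhat : Matrix (Fin n) (Fin n) ℝ) (hUhatUnit : IsUnit Uhat)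
    -- LMI (12)
    (hLMI1 :
      (fromBlocks
        (fromBlocks
          (fromBlocks Xhat 1 1 Yhat)
          (fromBlocks (A * Xhat) A Qhat (Yhat * A + Fhat * C))
          (fromBlocks (A * Xhat) A Qhat (Yhat * A + Fhat * C))ᵀ
          (fromBlocks Xhat 1 1 Yhat))
        (fromBlocks (fromBlocks D B (Yhat * D) (Yhat * B)) (fromBlocks 0 0 Fhat Fhat) 0 0)
        (fromBlocks (fromBlocks D B (Yhat * D) (Yhat * B)) (fromBlocks 0 0 Fhat Fhat) 0 0)ᵀ
        (fromBlocks (fromBlocks W⁻¹ 0 0 Gw) 0 0 (fromBlocks V⁻¹ 0 0 Gv))).PosDef)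
    -- LMI (13)
    (hLMI2 :
      (fromBlocks Ebar (fromCols (Xhat - Uhat) 1)
        (fromRows (Xhat - Uhat)ᵀ 1) (fromBlocks Xhat 1 1 Yhat)).PosDef)
    -- estimator reconstruction (14)–(15)
    (Shat : Matrix (Fin n) (Fin n) ℝ) (hShat : Shat = (1 - Yhat * Xhat) * Uhat⁻¹)
    (Ahat : Matrix (Fin n) (Fin n) ℝ)
    (hAhat : Ahat = Shat⁻¹ * (Qhat - Yhat * A * Xhat - Fhat * C * Xhat) * Uhat⁻¹)
    (Bhat : Matrix (Fin n) (Fin p) ℝ) (hBhat : Bhat = Shat⁻¹ * Fhat) :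
    IsUnit Shat ∧
    ∃ Xb : Matrix (Fin n ⊕ Fin n) (Fin n ⊕ Fin n) ℝ,
      Xb.PosDef ∧
      (Xb - (fromBlocks A 0 (Bhat * C) Ahat) * Xb * (fromBlocks A 0 (Bhat * C) Ahat)ᵀ
        - (fromBlocks (fromCols D B) 0 0 (fromCols Bhat Bhat) :
            Matrix (Fin n ⊕ Fin n) ((Fin d ⊕ Fin m) ⊕ (Fin p ⊕ Fin p)) ℝ)
          * (fromBlocks (fromBlocks W 0 0 Gw⁻¹) 0 0 (fromBlocks V 0 0 Gv⁻¹))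
          * (fromBlocks (fromCols D B) 0 0 (fromCols Bhat Bhat) :
            Matrix (Fin n ⊕ Fin n) ((Fin d ⊕ Fin m) ⊕ (Fin p ⊕ Fin p)) ℝ)ᵀ).PosDef ∧
      (Ebar - (fromCols 1 (-1) : Matrix (Fin n) (Fin n ⊕ Fin n) ℝ) * Xb
        * (fromCols 1 (-1) : Matrix (Fin n) (Fin n ⊕ Fin n) ℝ)ᵀ).PosDef := by
  -- basic notation
  classical
  -- P, its positive definiteness, basic consequences
  have hLMI2' : (fromBlocks Ebar (fromCols (Xhat - Uhat) 1)
      (fromCols (Xhat - Uhat) (1 : Matrix (Fin n) (Fin n) ℝ))ᵀ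
      (fromBlocks Xhat 1 1 Yhat)).PosDef := by
    rw [transpose_fromCols, transpose_one]; exact hLMI2
  set K : Matrix (Fin n) (Fin n ⊕ Fin n) ℝ := fromCols (Xhat - Uhat) 1 with hKdef
  set P : Matrix (Fin n ⊕ Fin n) (Fin n ⊕ Fin n) ℝ := fromBlocks Xhat 1 1 Yhat with hPdef
  have hP : P.PosDef := posDef₂₂ hLMI2'
  have hX : Xhat.PosDef := posDef₁₁ hP
  have hY : Yhat.PosDef := posDef₂₂ hP
  haveI iY := hY.isUnit.invertible
  haveI iU := hUhatUnit.invertible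
  haveI iW := hW.isUnit.invertible
  haveI iV := hV.isUnit.invertible
  haveI iGw := hGw.isUnit.invertible
  haveI iGv := hGv.isUnit.invertible
  -- Schur complement of P : Xhat - Yhat⁻¹ ≻ 0
  have hP'' : (fromBlocks Xhat (1 : Matrix (Fin n) (Fin n) ℝ)
      (1 : Matrix (Fin n) (Fin n) ℝ)ᵀ Yhat).PosDef := by rwa [transpose_one]
  have hXY : (Xhat - Yhat⁻¹).PosDef := by
    have := schur_posDef hY hP''
    rwa [transpose_one, Matrix.one_mul, Matrix.mul_one] at this
  -- Shat is a unit
  have hfac : (1 : Matrix (Fin n) (Fin n) ℝ) - Yhat * Xhat = -(Yhat * (Xhat - Yhat⁻¹)) := by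
    rw [Matrix.mul_sub, Matrix.mul_inv_of_invertible, neg_sub]
  have hSunit : IsUnit Shat := by
    rw [hShat, hfac]
    exact ((hY.isUnit.mul hXY.isUnit).neg).mul (Matrix.isUnit_nonsing_inv_iff.mpr hUhatUnit)
  haveI iS := hSunit.invertible
  refine ⟨hSunit, ?_⟩
  -- the transformation matrices
  set Pi2 : Matrix (Fin n ⊕ Fin n) (Fin n ⊕ Fin n) ℝ := fromBlocks 1 Yhat 0 Shatᵀ with hPi2
  have hPi2T : Pi2ᵀ = fromBlocks 1 0 Yhat Shat := by
    rw [hPi2, fromBlocks_transpose, transpose_one, transpose_zero, herm_t hYhatsymm,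
      transpose_transpose]
  have hPi2unit : IsUnit Pi2 := by
    rw [Matrix.isUnit_iff_isUnit_det, hPi2, det_fromBlocks_zero₂₁, det_one, one_mul,
      det_transpose, ← Matrix.isUnit_iff_isUnit_det]
    exact hSunit
  haveI iPi2 := hPi2unit.invertible
  set Pi1 : Matrix (Fin n ⊕ Fin n) (Fin n ⊕ Fin n) ℝ := fromBlocks Xhat 1 Uhat 0 with hPi1
  have hSU : Shat * Uhat = 1 - Yhat * Xhat := by
    rw [hShat, Matrix.inv_mul_cancel_right_of_invertible]
  have hP21 : P = Pi2ᵀ * Pi1 := by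
    rw [hPi2T, hPi1, fromBlocks_multiply, hPdef]
    apply fromBlocks_inj.mpr
    refine ⟨by simp, by simp, ?_, by simp⟩
    rw [hSU]; simp
  -- the candidate covariance matrix
  set Xb : Matrix (Fin n ⊕ Fin n) (Fin n ⊕ Fin n) ℝ := (Pi2ᵀ)⁻¹ * P * Pi2⁻¹ with hXbdef
  have hXbPD : Xb.PosDef := by
    have h1 : IsUnit Pi2⁻¹ := Matrix.isUnit_nonsing_inv_iff.mpr hPi2unit
    have := posDef_conj hP h1
    rwa [transpose_nonsing_inv] at this
  haveI iXb := hXbPD.isUnit.invertible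
  have hXbt : Xbᵀ = Xb := herm_t hXbPD.1
  have hXbPi : Xb * Pi2 = Pi1 := by
    rw [hXbdef, Matrix.inv_mul_cancel_right_of_invertible, hP21,
      Matrix.inv_mul_cancel_left_of_invertible]
  have hPiP : Pi2ᵀ * Xb * Pi2 = P := by
    rw [hXbdef]
    simp only [Matrix.mul_assoc, Matrix.mul_inv_cancel_left_of_invertible,
      Matrix.inv_mul_of_invertible, Matrix.mul_one,
      Matrix.mul_inv_cancel_right_of_invertible]
  have hPinv : P⁻¹ = Pi2⁻¹ * Xb⁻¹ * (Pi2ᵀ)⁻¹ := by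
    apply Matrix.inv_eq_right_inv
    rw [← hPiP]
    simp only [Matrix.mul_assoc, Matrix.mul_inv_cancel_left_of_invertible,
      Matrix.mul_inv_of_invertible, Matrix.mul_one]
  -- reconstruction identities
  have hSB : Shat * Bhat = Fhat := by rw [hBhat, Matrix.mul_inv_cancel_left_of_invertible]
  have hSAU : Shat * Ahat * Uhat = Qhat - Yhat * A * Xhat - Fhat * C * Xhat := by
    rw [hAhat, ← Matrix.mul_assoc, Matrix.inv_mul_cancel_right_of_invertible,
      Matrix.mul_inv_cancel_left_of_invertible]
  -- abbreviations for the big LMI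
  set L : Matrix (Fin n ⊕ Fin n) (Fin n ⊕ Fin n) ℝ :=
    fromBlocks (A * Xhat) A Qhat (Yhat * A + Fhat * C) with hLdef
  set N1 : Matrix (Fin n ⊕ Fin n) (Fin d ⊕ Fin m) ℝ :=
    fromBlocks D B (Yhat * D) (Yhat * B) with hN1
  set N2 : Matrix (Fin n ⊕ Fin n) (Fin p ⊕ Fin p) ℝ := fromBlocks 0 0 Fhat Fhat with hN2
  set W' : Matrix (Fin d ⊕ Fin m) (Fin d ⊕ Fin m) ℝ := fromBlocks W 0 0 Gw⁻¹ with hW'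
  set V' : Matrix (Fin p ⊕ Fin p) (Fin p ⊕ Fin p) ℝ := fromBlocks V 0 0 Gv⁻¹ with hV'
  set R : Matrix ((Fin d ⊕ Fin m) ⊕ Fin p ⊕ Fin p) ((Fin d ⊕ Fin m) ⊕ Fin p ⊕ Fin p) ℝ :=
    fromBlocks (fromBlocks W⁻¹ 0 0 Gw) 0 0 (fromBlocks V⁻¹ 0 0 Gv) with hRdef
  set Wb : Matrix ((Fin d ⊕ Fin m) ⊕ Fin p ⊕ Fin p) ((Fin d ⊕ Fin m) ⊕ Fin p ⊕ Fin p) ℝ :=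
    fromBlocks W' 0 0 V' with hWb
  have hR : R.PosDef := posDef₂₂ hLMI1
  have hRinv : R⁻¹ = Wb := by
    apply Matrix.inv_eq_right_inv
    rw [hRdef, hWb, hW', hV', fromBlocks_multiply, fromBlocks_multiply, fromBlocks_multiply]
    simp [Matrix.inv_mul_of_invertible, Matrix.mul_inv_of_invertible, fromBlocks_one]
  -- first Schur complement of the big LMI
  have hS1 := schur_posDef hR hLMI1
  rw [hRinv] at hS1
  set Phi : Matrix (Fin n ⊕ Fin n) (Fin n ⊕ Fin n) ℝ :=
    N1 * W' * N1ᵀ + N2 * V' * N2ᵀ with hPhi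
  have hPhiEq : fromBlocks N1 N2 (0 : Matrix (Fin n ⊕ Fin n) (Fin d ⊕ Fin m) ℝ)
      (0 : Matrix (Fin n ⊕ Fin n) (Fin p ⊕ Fin p) ℝ) * Wb
      * (fromBlocks N1 N2 (0 : Matrix (Fin n ⊕ Fin n) (Fin d ⊕ Fin m) ℝ)
      (0 : Matrix (Fin n ⊕ Fin n) (Fin p ⊕ Fin p) ℝ))ᵀ = fromBlocks Phi 0 0 0 := by
    rw [hWb, fromBlocks_transpose, fromBlocks_multiply, fromBlocks_multiply, hPhi]
    apply fromBlocks_inj.mpr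
    refine ⟨by simp, by simp, by simp, by simp⟩
  rw [hPhiEq, fromBlocks_sub, sub_zero, sub_zero, sub_zero] at hS1
  have hS2 := schur_posDef hP hS1
  -- block computation : L = Pi2ᵀ * (Ahat-block * Pi1)
  have hblock : Yhat * (A * Xhat) + Shat * (Bhat * C * Xhat + Ahat * Uhat) = Qhat := by
    rw [Matrix.mul_add,
      show Shat * (Bhat * C * Xhat) = Fhat * C * Xhat by
        rw [← Matrix.mul_assoc, ← Matrix.mul_assoc, hSB],
      show Shat * (Ahat * Uhat) = Qhat - Yhat * A * Xhat - Fhat * C * Xhat by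
        rw [← Matrix.mul_assoc, hSAU]]
    simp only [← Matrix.mul_assoc]
    abel
  have hL : L = Pi2ᵀ * (fromBlocks A 0 (Bhat * C) Ahat * Pi1) := by
    rw [hPi2T, hPi1, fromBlocks_multiply, fromBlocks_multiply, hLdef]
    apply fromBlocks_inj.mpr
    refine ⟨by simp, by simp, ?_, ?_⟩
    · simp only [Matrix.one_mul, Matrix.zero_mul, Matrix.mul_zero, Matrix.mul_one,
        add_zero, zero_add]
      rw [hblock]
    · simp only [Matrix.one_mul, Matrix.zero_mul, Matrix.mul_zero, Matrix.mul_one,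
        add_zero, zero_add]
      rw [← Matrix.mul_assoc, hSB]
  have hL2 : L = Pi2ᵀ * (fromBlocks A 0 (Bhat * C) Ahat * (Xb * Pi2)) := by
    rw [hL, hXbPi]
  -- identity e2
  have e2 : L * P⁻¹ * Lᵀ = Pi2ᵀ * (fromBlocks A 0 (Bhat * C) Ahat * Xb
      * (fromBlocks A 0 (Bhat * C) Ahat)ᵀ) * Pi2 := by
    rw [hL2, hPinv]
    simp only [transpose_mul, transpose_transpose, hXbt, Matrix.mul_assoc,
      Matrix.mul_inv_cancel_left_of_invertible, Matrix.inv_mul_cancel_left_of_invertible]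
  -- identity e3
  set Bb : Matrix (Fin n ⊕ Fin n) ((Fin d ⊕ Fin m) ⊕ (Fin p ⊕ Fin p)) ℝ :=
    fromBlocks (fromCols D B) 0 0 (fromCols Bhat Bhat) with hBb
  have hBb' : Bb = fromCols (fromBlocks D B 0 0) (fromBlocks 0 0 Bhat Bhat) := by
    rw [hBb]
    ext i j
    rcases i with i | i <;> rcases j with (j | j) | (j | j) <;>
      simp [fromCols, fromBlocks]
  have hPB : Pi2ᵀ * Bb = fromCols N1 N2 := by
    rw [hBb', hPi2T,
      mul_fromCols,
      fromBlocks_multiply, fromBlocks_multiply, hN1, hN2]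
    refine (fromCols_ext_iff _ _ _ _).mpr ⟨?_, ?_⟩ <;>
      (apply fromBlocks_inj.mpr; refine ⟨by simp, by simp, by simp [hSB], by simp [hSB]⟩)
  have e3 : Pi2ᵀ * (Bb * Wb * Bbᵀ) * Pi2 = Phi := by
    have h1 : Pi2ᵀ * (Bb * Wb * Bbᵀ) * Pi2 = (Pi2ᵀ * Bb) * Wb * (Pi2ᵀ * Bb)ᵀ := by
      simp only [transpose_mul, transpose_transpose, Matrix.mul_assoc]
    rw [h1, hPB, hWb, transpose_fromCols, fromCols_mul_fromBlocks,
      fromCols_mul_fromRows, hPhi]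
    simp
  -- assemble the main inequality
  have hEqBig : P - Phi - L * P⁻¹ * Lᵀ
      = Pi2ᵀ * (Xb - fromBlocks A 0 (Bhat * C) Ahat * Xb * (fromBlocks A 0 (Bhat * C) Ahat)ᵀ
        - Bb * Wb * Bbᵀ) * Pi2 := by
    simp only [Matrix.mul_sub, Matrix.sub_mul]
    rw [hPiP, ← e2, e3]
    rw [sub_right_comm]
  refine ⟨Xb, hXbPD, ?_, ?_⟩
  · exact posDef_of_conj (by rw [← hEqBig]; exact hS2) hPi2unit
  · -- second conclusion
    have hSchur2 : (Ebar - K * P⁻¹ * Kᵀ).PosDef := schur_posDef hP hLMI2'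
    have hC1 : (fromCols 1 (-1) : Matrix (Fin n) (Fin n ⊕ Fin n) ℝ) * Pi1 = K := by
      rw [hPi1, fromCols_mul_fromBlocks, hKdef]
      congr 1 <;> simp [sub_eq_add_neg]
    have hK2 : K = (fromCols 1 (-1) : Matrix (Fin n) (Fin n ⊕ Fin n) ℝ) * (Xb * Pi2) := by
      rw [← hC1, hXbPi]
    have hEq2 : K * P⁻¹ * Kᵀ
        = (fromCols 1 (-1) : Matrix (Fin n) (Fin n ⊕ Fin n) ℝ) * Xb
          * (fromCols 1 (-1) : Matrix (Fin n) (Fin n ⊕ Fin n) ℝ)ᵀ := by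
      rw [hK2, hPinv]
      simp only [transpose_mul, transpose_transpose, hXbt, Matrix.mul_assoc,
        Matrix.mul_inv_cancel_left_of_invertible, Matrix.inv_mul_cancel_left_of_invertible]
    rw [← hEq2]
    exact hSchur2
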